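/- Let (X, d) be a nonempty finite metric space and p, q ∈ Δ^X. Then the 1-Wasserstein distance W₁(p,q), defined as the minimum over couplings γ of (p,q) of Σ_{x,y} d(x,y)·γ(x,y), equals the maximum over all 1-Lipschitz functions f : X → ℝ (i.e. |f(x) − f(y)| ≤ d(x,y) for all x,y) of Σ_x f(x)·( p(x) − q(x) ). -/

import Mathlib

noncomputable section KRaux

open Finset

variable {X : Type*} [Fintype X] [Nonempty X] [MetricSpace X]

/-- transport cost of a plan -/
def KRcost (γ : X → X → ℝ) : ℝ := ∑ x, ∑ y, dist x y * γ x y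

def KRCoupling (p q : X → ℝ) : Set (X → X → ℝ) :=
  {γ | (∀ x y, 0 ≤ γ x y) ∧ (∀ x, ∑ y, γ x y = p x) ∧ (∀ y, ∑ x, γ x y = q y)}

lemma KRcont_eval (x y : X) : Continuous fun γ : X → X → ℝ => γ x y :=
  (continuous_apply y).comp (continuous_apply x)

lemma KRcont_cost : Continuous (KRcost (X := X)) :=
  continuous_finset_sum _ fun x _ => continuous_finset_sum _ fun y _ =>
    continuous_const.mul (KRcont_eval x y)

/-- weak duality -/
lemma KRweak (p q : X → ℝ) (γ : X → X → ℝ) (hγ0 : ∀ x y, 0 ≤ γ x y)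
    (hrow : ∀ x, ∑ y, γ x y = p x) (hcol : ∀ y, ∑ x, γ x y = q y)
    (f : X → ℝ) (hf : ∀ x y, |f x - f y| ≤ dist x y) :
    ∑ x, f x * (p x - q x) ≤ KRcost γ := by
  have h1 : ∑ x, f x * (p x - q x) = ∑ x, ∑ y, (f x - f y) * γ x y := by
    have e1 : ∑ x, f x * p x = ∑ x, ∑ y, f x * γ x y :=
      Finset.sum_congr rfl fun x _ => by rw [← hrow x, Finset.mul_sum]
    have e2 : ∑ x, f x * q x = ∑ x, ∑ y, f y * γ x y := by
      rw [Finset.sum_comm]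
      exact Finset.sum_congr rfl fun y _ => by rw [← hcol y, Finset.mul_sum]
    calc ∑ x, f x * (p x - q x) = ∑ x, (f x * p x - f x * q x) := by
          exact Finset.sum_congr rfl fun x _ => by ring
      _ = ∑ x, f x * p x - ∑ x, f x * q x := Finset.sum_sub_distrib _ _
      _ = ∑ x, ∑ y, f x * γ x y - ∑ x, ∑ y, f y * γ x y := by rw [e1, e2]
      _ = ∑ x, ∑ y, (f x - f y) * γ x y := by
          rw [← Finset.sum_sub_distrib]
          exact Finset.sum_congr rfl fun x _ => by
            rw [← Finset.sum_sub_distrib]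
            exact Finset.sum_congr rfl fun y _ => by ring
  rw [h1]
  refine Finset.sum_le_sum fun x _ => Finset.sum_le_sum fun y _ => ?_
  exact mul_le_mul_of_nonneg_right ((le_abs_self _).trans (hf x y)) (hγ0 x y)

lemma KRisClosed_coupling (p q : X → ℝ) : IsClosed (KRCoupling p q) := by
  have h1 : IsClosed {γ : X → X → ℝ | ∀ x y, 0 ≤ γ x y} := by
    have : {γ : X → X → ℝ | ∀ x y, 0 ≤ γ x y} = ⋂ x, ⋂ y, {γ | 0 ≤ γ x y} := by
      ext γ; simp
    rw [this]
    exact isClosed_iInter fun x => isClosed_iInter fun y =>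
      isClosed_le continuous_const (KRcont_eval x y)
  have h2 : IsClosed {γ : X → X → ℝ | ∀ x, ∑ y, γ x y = p x} := by
    have : {γ : X → X → ℝ | ∀ x, ∑ y, γ x y = p x} = ⋂ x, {γ | ∑ y, γ x y = p x} := by
      ext γ; simp
    rw [this]
    exact isClosed_iInter fun x =>
      isClosed_eq (continuous_finset_sum _ fun y _ => KRcont_eval x y) continuous_const
  have h3 : IsClosed {γ : X → X → ℝ | ∀ y, ∑ x, γ x y = q y} := by
    have : {γ : X → X → ℝ | ∀ y, ∑ x, γ x y = q y} = ⋂ y, {γ | ∑ x, γ x y = q y} := by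
      ext γ; simp
    rw [this]
    exact isClosed_iInter fun y =>
      isClosed_eq (continuous_finset_sum _ fun x _ => KRcont_eval x y) continuous_const
  have : KRCoupling p q = {γ : X → X → ℝ | ∀ x y, 0 ≤ γ x y} ∩
      ({γ | ∀ x, ∑ y, γ x y = p x} ∩ {γ | ∀ y, ∑ x, γ x y = q y}) := by
    ext γ; simp [KRCoupling, and_assoc]
  rw [this]
  exact h1.inter (h2.inter h3)

lemma KRisCompact_coupling (p q : X → ℝ) (hp : p ∈ stdSimplex ℝ X) :
    IsCompact (KRCoupling p q) := by
  refine IsCompact.of_isClosed_subset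
    (isCompact_univ_pi fun _ : X => isCompact_univ_pi fun _ : X => isCompact_Icc (a := (0:ℝ)) (b := 1))
    (KRisClosed_coupling p q) ?_
  intro γ hγ
  rw [Set.mem_univ_pi]
  intro x
  rw [Set.mem_univ_pi]
  intro y
  refine ⟨hγ.1 x y, ?_⟩
  have h1 : γ x y ≤ ∑ y', γ x y' :=
    Finset.single_le_sum (fun i _ => hγ.1 x i) (Finset.mem_univ y)
  have h2 : p x ≤ ∑ x', p x' :=
    Finset.single_le_sum (fun i _ => hp.1 i) (Finset.mem_univ x)
  rw [hγ.2.1 x] at h1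
  rw [hp.2] at h2
  linarith

lemma KRcoupling_nonempty (p q : X → ℝ) (hp : p ∈ stdSimplex ℝ X) (hq : q ∈ stdSimplex ℝ X) :
    (fun x y => p x * q y) ∈ KRCoupling p q := by
  refine ⟨fun x y => mul_nonneg (hp.1 x) (hq.1 y), fun x => ?_, fun y => ?_⟩
  · rw [← Finset.mul_sum, hq.2, mul_one]
  · simp_rw [← Finset.sum_mul, hp.2, one_mul]

end KRaux
set_option linter.unusedSectionVars false

noncomputable section KRaux2
open Finset

variable {X : Type*} [Fintype X] [Nonempty X] [MetricSpace X]

def KRLipN : Set (X → ℝ) :=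
  {f | (∀ x y, |f x - f y| ≤ dist x y) ∧ f (Classical.arbitrary X) = 0}

lemma KRisCompact_LipN : IsCompact (KRLipN (X := X)) := by
  set x0 := Classical.arbitrary X
  set R : ℝ := Finset.univ.sup' Finset.univ_nonempty (fun x : X => dist x x0) with hR
  have hRb : ∀ x : X, dist x x0 ≤ R := fun x => Finset.le_sup' (fun x : X => dist x x0) (Finset.mem_univ x)
  have hclosed : IsClosed (KRLipN (X := X)) := by
    have h1 : IsClosed {f : X → ℝ | ∀ x y, |f x - f y| ≤ dist x y} := by
      have : {f : X → ℝ | ∀ x y, |f x - f y| ≤ dist x y}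
          = ⋂ x, ⋂ y, {f | |f x - f y| ≤ dist x y} := by ext f; simp
      rw [this]
      exact isClosed_iInter fun x => isClosed_iInter fun y =>
        isClosed_le (((continuous_apply x).sub (continuous_apply y)).abs) continuous_const
    have h2 : IsClosed {f : X → ℝ | f x0 = 0} :=
      isClosed_eq (continuous_apply x0) continuous_const
    have : KRLipN (X := X) = {f : X → ℝ | ∀ x y, |f x - f y| ≤ dist x y} ∩ {f | f x0 = 0} := rfl
    rw [this]; exact h1.inter h2
  refine IsCompact.of_isClosed_subset
    (isCompact_univ_pi fun _ : X => isCompact_Icc (a := -R) (b := R)) hclosed ?_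
  intro f hf
  rw [Set.mem_univ_pi]
  intro x
  have : |f x| ≤ R := by
    have := hf.1 x x0
    rw [hf.2] at this
    simpa using this.trans (hRb x)
  exact abs_le.mp this

lemma KRzero_mem_LipN : (0 : X → ℝ) ∈ KRLipN := by
  refine ⟨fun x y => ?_, rfl⟩
  simp [dist_nonneg]

end KRaux2

noncomputable section KRaux3
open Finset

variable {X : Type*} [Fintype X] [Nonempty X] [MetricSpace X]

open scoped Classical in
def KRe (x : X) : X → ℝ := fun a => if x = a then 1 else 0

set_option maxHeartbeats 1000000 in
lemma KReps (p q : X → ℝ) (hp : p ∈ stdSimplex ℝ X) (hq : q ∈ stdSimplex ℝ X)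
    (γ₀ : X → X → ℝ) (hγ₀ : γ₀ ∈ KRCoupling p q)
    (hmin : ∀ γ ∈ KRCoupling p q, KRcost γ₀ ≤ KRcost γ)
    (ε : ℝ) (hε : 0 < ε) :
    ∃ f : X → ℝ, (∀ x y, |f x - f y| ≤ dist x y) ∧
      KRcost γ₀ - ε < ∑ x, f x * (p x - q x) := by
  classical
  obtain ⟨hγ0, hrow, hcol⟩ := hγ₀
  set M := KRcost γ₀ with hM
  set x0 := Classical.arbitrary X with hx0
  set maxd : ℝ := Finset.univ.sup' Finset.univ_nonempty (fun z : X × X => dist z.1 z.2)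
    with hmaxddef
  have hmd : ∀ x y : X, dist x y ≤ maxd := fun x y =>
    Finset.le_sup' (fun z : X × X => dist z.1 z.2) (Finset.mem_univ (x, y))
  have hmd0 : (0:ℝ) ≤ maxd := le_trans dist_nonneg (hmd x0 x0)
  set S : Set ((X → X → ℝ) × ℝ) :=
    {w | (∀ x y, 0 ≤ w.1 x y) ∧ (∑ x, ∑ y, w.1 x y = 1) ∧ KRcost w.1 ≤ w.2 ∧ w.2 ≤ maxd}
    with hSdef
  set Φ : ((X → X → ℝ) × ℝ) → ((X → ℝ) × (X → ℝ) × ℝ) :=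
    fun w => ((fun x => ∑ y, w.1 x y), (fun y => ∑ x, w.1 x y), w.2) with hΦdef
  set D : Set ((X → ℝ) × (X → ℝ) × ℝ) := Φ '' S with hDdef
  -- S is closed
  have hclosedS : IsClosed S := by
    have c1 : IsClosed {w : (X → X → ℝ) × ℝ | ∀ x y, 0 ≤ w.1 x y} := by
      have : {w : (X → X → ℝ) × ℝ | ∀ x y, 0 ≤ w.1 x y}
          = ⋂ x, ⋂ y, {w : (X → X → ℝ) × ℝ | 0 ≤ w.1 x y} := by ext w; simp
      rw [this]
      exact isClosed_iInter fun x => isClosed_iInter fun y =>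
        isClosed_le continuous_const ((KRcont_eval x y).comp continuous_fst)
    have c2 : IsClosed {w : (X → X → ℝ) × ℝ | ∑ x, ∑ y, w.1 x y = 1} :=
      isClosed_eq (continuous_finset_sum _ fun x _ => continuous_finset_sum _ fun y _ =>
        (KRcont_eval x y).comp continuous_fst) continuous_const
    have c3 : IsClosed {w : (X → X → ℝ) × ℝ | KRcost w.1 ≤ w.2} :=
      isClosed_le (KRcont_cost.comp continuous_fst) continuous_snd
    have c4 : IsClosed {w : (X → X → ℝ) × ℝ | w.2 ≤ maxd} :=
      isClosed_le continuous_snd continuous_const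
    have : S = {w : (X → X → ℝ) × ℝ | ∀ x y, 0 ≤ w.1 x y} ∩
        ({w | ∑ x, ∑ y, w.1 x y = 1} ∩ ({w | KRcost w.1 ≤ w.2} ∩ {w | w.2 ≤ maxd})) := by
      ext w; simp [hSdef, and_assoc]
    rw [this]
    exact c1.inter (c2.inter (c3.inter c4))
  -- S is compact
  have hcompS : IsCompact S := by
    refine IsCompact.of_isClosed_subset
      (((isCompact_univ_pi fun _ : X => isCompact_univ_pi fun _ : X =>
          isCompact_Icc (a := (0:ℝ)) (b := 1))).prod
        (isCompact_Icc (a := (0:ℝ)) (b := maxd))) hclosedS ?_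
    rintro ⟨γ, t⟩ ⟨h0, h1, h2, h3⟩
    constructor
    · rw [Set.mem_univ_pi]; intro x; rw [Set.mem_univ_pi]; intro y
      refine ⟨h0 x y, ?_⟩
      have e1 : γ x y ≤ ∑ y', γ x y' :=
        Finset.single_le_sum (fun i _ => h0 x i) (Finset.mem_univ y)
      have e2 : ∑ y', γ x y' ≤ ∑ x', ∑ y', γ x' y' :=
        Finset.single_le_sum (f := fun x' => ∑ y', γ x' y')
          (fun i _ => Finset.sum_nonneg fun j _ => h0 i j) (Finset.mem_univ x)
      simp only at h1 e1 e2
      linarith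
    · have hc0 : (0:ℝ) ≤ KRcost γ := by
        refine Finset.sum_nonneg fun x _ => Finset.sum_nonneg fun y _ =>
          mul_nonneg dist_nonneg (h0 x y)
      exact ⟨le_trans hc0 h2, h3⟩
  -- Φ is continuous
  have hcontΦ : Continuous Φ := by
    refine Continuous.prodMk ?_ (Continuous.prodMk ?_ continuous_snd)
    · exact continuous_pi fun x => continuous_finset_sum _ fun y _ =>
        (KRcont_eval x y).comp continuous_fst
    · exact continuous_pi fun y => continuous_finset_sum _ fun x _ =>
        (KRcont_eval x y).comp continuous_fst
  have hclosedD : IsClosed D := (hcompS.image hcontΦ).isClosed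
  -- D is convex
  have hconvD : Convex ℝ D := by
    rintro z1 ⟨w1, hw1, rfl⟩ z2 ⟨w2, hw2, rfl⟩ a b ha hb hab
    refine ⟨(fun x y => a * w1.1 x y + b * w2.1 x y, a * w1.2 + b * w2.2), ⟨?_, ?_, ?_, ?_⟩, ?_⟩
    · exact fun x y => add_nonneg (mul_nonneg ha (hw1.1 x y)) (mul_nonneg hb (hw2.1 x y))
    · have := hw1.2.1; have := hw2.2.1
      simp only [Finset.sum_add_distrib, ← Finset.mul_sum]
      rw [hw1.2.1, hw2.2.1]; linarith
    · have e : KRcost (fun x y => a * w1.1 x y + b * w2.1 x y)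
          = a * KRcost w1.1 + b * KRcost w2.1 := by
        unfold KRcost
        rw [Finset.mul_sum, Finset.mul_sum, ← Finset.sum_add_distrib]
        refine Finset.sum_congr rfl fun x _ => ?_
        rw [Finset.mul_sum, Finset.mul_sum, ← Finset.sum_add_distrib]
        exact Finset.sum_congr rfl fun y _ => by ring
      rw [e]
      exact add_le_add (mul_le_mul_of_nonneg_left hw1.2.2.1 ha)
        (mul_le_mul_of_nonneg_left hw2.2.2.1 hb)
    · have j1 : a * w1.2 ≤ a * maxd := mul_le_mul_of_nonneg_left hw1.2.2.2 ha
      have j2 : b * w2.2 ≤ b * maxd := mul_le_mul_of_nonneg_left hw2.2.2.2 hb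
      have j3 : a * maxd + b * maxd = maxd := by rw [← add_mul, hab, one_mul]
      show a * w1.2 + b * w2.2 ≤ maxd
      linarith
    · -- Φ of the combination equals the convex combination of images
      refine Prod.ext_iff.mpr ⟨?_, Prod.ext_iff.mpr ⟨?_, ?_⟩⟩
      · funext x
        simp [hΦdef, Finset.sum_add_distrib, Finset.mul_sum]
      · funext y
        simp [hΦdef, Finset.sum_add_distrib, Finset.mul_sum]
      · simp [hΦdef]
  -- the separated point is not in D
  have hbnot : ((p, q, M - ε) : (X → ℝ) × (X → ℝ) × ℝ) ∉ D := by
    rintro ⟨⟨γ, t⟩, hw, heq⟩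
    simp only [hΦdef, Prod.mk.injEq] at heq
    obtain ⟨h1, h2, h3⟩ := heq
    have hmem : γ ∈ KRCoupling p q :=
      ⟨hw.1, fun x => congrFun h1 x, fun y => congrFun h2 y⟩
    have e1 := hmin γ hmem
    have e2 := hw.2.2.1
    simp only at e2 h3
    rw [h3] at e2
    linarith
  obtain ⟨F, s, hFD, hFb⟩ := geometric_hahn_banach_closed_point hconvD hclosedD hbnot
  -- decompose F
  obtain ⟨u, v, β, hdec⟩ : ∃ (u v : X → ℝ) (β : ℝ), ∀ (r c : X → ℝ) (t : ℝ),
      F (r, c, t) = (∑ x, r x * u x) + (∑ y, c y * v y) + t * β := by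
    refine ⟨fun x => F (KRe x, 0, 0), fun y => F (0, KRe y, 0), F (0, 0, 1), fun r c t => ?_⟩
    have hsplit : ((r, c, t) : (X → ℝ) × (X → ℝ) × ℝ)
        = (∑ i, r i • ((KRe i, 0, 0) : (X → ℝ) × (X → ℝ) × ℝ))
          + ((∑ j, c j • ((0, KRe j, 0) : (X → ℝ) × (X → ℝ) × ℝ))
          + t • ((0, 0, 1) : (X → ℝ) × (X → ℝ) × ℝ)) := by
      have h1 : r = ∑ i, r i • KRe i := by
        have := pi_eq_sum_univ r
        convert this using 1
        rfl
      have h2 : c = ∑ j, c j • KRe j := by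
        have := pi_eq_sum_univ c
        convert this using 1
        rfl
      refine Prod.ext_iff.mpr ⟨?_, Prod.ext_iff.mpr ⟨?_, ?_⟩⟩
      · simp only [Prod.fst_sum, Prod.smul_fst, Prod.fst_add, Prod.snd_add, Prod.snd_sum,
          Prod.smul_snd, smul_zero, Finset.sum_const_zero, add_zero, zero_add]
        exact h1
      · simp only [Prod.fst_sum, Prod.smul_fst, Prod.fst_add, Prod.snd_add, Prod.snd_sum,
          Prod.smul_snd, smul_zero, Finset.sum_const_zero, add_zero, zero_add]
        exact h2
      · simp only [Prod.fst_sum, Prod.smul_fst, Prod.fst_add, Prod.snd_add, Prod.snd_sum,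
          Prod.smul_snd, smul_zero, Finset.sum_const_zero, add_zero, zero_add, smul_eq_mul,
          mul_one]
        simp
    rw [hsplit, map_add, map_add, map_sum, map_sum, map_smul]
    simp only [map_smul, smul_eq_mul]
    ring
  -- the point-mass elements of D
  have hesum : ∀ x : X, ∑ a, KRe x a = 1 := by
    intro x; simp [KRe, Finset.sum_ite_eq]
  have hpt : ∀ x y : X, ((KRe x, KRe y, dist x y) : (X → ℝ) × (X → ℝ) × ℝ) ∈ D := by
    intro x y
    refine ⟨(fun a b => KRe x a * KRe y b, dist x y), ⟨?_, ?_, ?_, hmd x y⟩, ?_⟩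
    · intro a b; unfold KRe; dsimp only; split_ifs <;> norm_num
    · simp only [← Finset.mul_sum, hesum]
      simpa using hesum x
    · have e : KRcost (fun a b => KRe x a * KRe y b) = dist x y := by
        unfold KRcost
        rw [Finset.sum_eq_single x]
        · rw [Finset.sum_eq_single y]
          · simp [KRe]
          · intro b _ hb; simp [KRe, Ne.symm hb]
          · intro hy; exact absurd (Finset.mem_univ y) hy
        · intro a _ ha
          refine Finset.sum_eq_zero fun b _ => ?_
          simp [KRe, Ne.symm ha]
        · intro hx; exact absurd (Finset.mem_univ x) hx
      rw [e]
    · refine Prod.ext_iff.mpr ⟨?_, Prod.ext_iff.mpr ⟨?_, ?_⟩⟩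
      · funext a
        simp only [hΦdef, ← Finset.mul_sum, hesum, mul_one]
      · funext b
        simp only [hΦdef, ← Finset.sum_mul, hesum, one_mul]
      · simp [hΦdef]
  -- the optimal coupling element of D
  have hMmaxd : M ≤ maxd := by
    have e1 : KRcost γ₀ ≤ ∑ x, ∑ y, maxd * γ₀ x y :=
      Finset.sum_le_sum fun x _ => Finset.sum_le_sum fun y _ =>
        mul_le_mul_of_nonneg_right (hmd x y) (hγ0 x y)
    have e2 : ∑ x, ∑ y, maxd * γ₀ x y = maxd := by
      simp only [← Finset.mul_sum, hrow]
      rw [hp.2, mul_one]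
    rw [hM]; rw [e2] at e1; exact e1
  have hopt : ((p, q, M) : (X → ℝ) × (X → ℝ) × ℝ) ∈ D := by
    refine ⟨(γ₀, M), ⟨hγ0, ?_, le_of_eq hM.symm, hMmaxd⟩, ?_⟩
    · simp only [hrow]; exact hp.2
    · refine Prod.ext_iff.mpr ⟨?_, Prod.ext_iff.mpr ⟨?_, ?_⟩⟩
      · funext x; simp [hΦdef, hrow]
      · funext y; simp [hΦdef, hcol]
      · simp [hΦdef]
  -- the three inequalities
  have hineq1 : ∀ x y : X, u x + v y + dist x y * β < s := by
    intro x y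
    have := hFD _ (hpt x y)
    rw [hdec] at this
    simpa [KRe, ite_mul, Finset.sum_ite_eq] using this
  have hineq2 : (∑ x, p x * u x) + (∑ y, q y * v y) + M * β < s := by
    have := hFD _ hopt; rwa [hdec] at this
  have hineq3 : s < (∑ x, p x * u x) + (∑ y, q y * v y) + (M - ε) * β := by
    have := hFb; rwa [hdec] at this
  have hβ : β < 0 := by nlinarith
  set α : ℝ := -β with hαdef
  have hα : 0 < α := by rw [hαdef]; linarith
  have hβα : β = -α := by rw [hαdef]; ring
  -- dual pair g, hh
  set g : X → ℝ := fun x => u x / α with hgdef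
  set hh : X → ℝ := fun y => (s - v y) / α with hhdef
  have hfeas : ∀ x y : X, g x - hh y ≤ dist x y := by
    intro x y
    have h1 := hineq1 x y
    rw [hβα] at h1
    have e : g x - hh y = (u x + v y - s) / α := by
      rw [hgdef, hhdef]; dsimp only; rw [div_sub_div_same]; ring_nf
    rw [e, div_le_iff₀ hα]
    nlinarith
  have hvalgt : M - ε < (∑ x, g x * p x) - (∑ x, hh x * q x) := by
    have e1 : ∑ x, g x * p x = (∑ x, p x * u x) / α := by
      rw [Finset.sum_div]
      exact Finset.sum_congr rfl fun x _ => by rw [hgdef]; dsimp only; ring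
    have e2 : ∑ x, hh x * q x = (s - ∑ y, q y * v y) / α := by
      have : ∀ x : X, hh x * q x = (s * q x - q x * v x) / α := fun x => by
        rw [hhdef]; dsimp only; ring
      simp_rw [this]
      rw [← Finset.sum_div]
      congr 1
      rw [Finset.sum_sub_distrib, ← Finset.mul_sum, hq.2, mul_one]
    rw [e1, e2, div_sub_div_same]
    rw [lt_div_iff₀ hα]
    rw [hβα] at hineq3
    nlinarith
  -- the Lipschitz function
  set f : X → ℝ := fun x => Finset.univ.inf' Finset.univ_nonempty (fun y => hh y + dist x y)
    with hfdef
  have hfle : ∀ x, f x ≤ hh x := by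
    intro x
    have := Finset.inf'_le (fun y => hh y + dist x y) (Finset.mem_univ x)
    simpa only [hfdef, dist_self, add_zero] using this
  have hgle : ∀ x, g x ≤ f x := by
    intro x
    refine Finset.le_inf' _ _ fun y _ => ?_
    have := hfeas x y; linarith
  have hlip : ∀ x y : X, |f x - f y| ≤ dist x y := by
    have key : ∀ x y : X, f x - f y ≤ dist x y := by
      intro x y
      obtain ⟨y0, _, hy0⟩ := Finset.exists_mem_eq_inf' Finset.univ_nonempty
        (fun z => hh z + dist y z)
      have h1 : f x ≤ hh y0 + dist x y0 := Finset.inf'_le _ (Finset.mem_univ y0)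
      have h2 : dist x y0 ≤ dist x y + dist y y0 := dist_triangle x y y0
      have h3 : f y = hh y0 + dist y y0 := hy0
      linarith
    intro x y
    rw [abs_sub_le_iff]
    exact ⟨key x y, by rw [dist_comm]; exact key y x⟩
  refine ⟨f, hlip, ?_⟩
  have e : ∑ x, f x * (p x - q x) = ∑ x, f x * p x - ∑ x, f x * q x := by
    rw [← Finset.sum_sub_distrib]
    exact Finset.sum_congr rfl fun x _ => by ring
  have i1 : ∑ x, g x * p x ≤ ∑ x, f x * p x :=
    Finset.sum_le_sum fun x _ => mul_le_mul_of_nonneg_right (hgle x) (hp.1 x)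
  have i2 : ∑ x, f x * q x ≤ ∑ x, hh x * q x :=
    Finset.sum_le_sum fun x _ => mul_le_mul_of_nonneg_right (hfle x) (hq.1 x)
  rw [e]
  linarith

end KRaux3

open Finset in
/-- **Kantorovich–Rubinstein duality for the 1-Wasserstein distance on a finite metric
space.**  For `p, q ∈ Δ^X`, the minimum over couplings `γ` of `(p,q)` of
`Σ_{x,y} d(x,y)·γ(x,y)` equals the maximum over 1-Lipschitz functions `f : X → ℝ` of
`Σ_x f(x)(p(x) − q(x))`. -/
theorem kantorovich_rubinstein_finite
    (X : Type*) [Fintype X] [Nonempty X] [MetricSpace X]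
    (p q : X → ℝ) (hp : p ∈ stdSimplex ℝ X) (hq : q ∈ stdSimplex ℝ X) :
    ∃ m : ℝ,
      IsLeast {t : ℝ | ∃ γ : X → X → ℝ,
          (∀ x y, 0 ≤ γ x y) ∧
          (∀ x, ∑ y, γ x y = p x) ∧
          (∀ y, ∑ x, γ x y = q y) ∧
          t = ∑ x, ∑ y, dist x y * γ x y} m ∧
      IsGreatest {t : ℝ | ∃ f : X → ℝ,
          (∀ x y, |f x - f y| ≤ dist x y) ∧
          t = ∑ x, f x * (p x - q x)} m := by
  classical
  obtain ⟨γ₀, hγ₀, hminOn⟩ := (KRisCompact_coupling p q hp).exists_isMinOn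
    ⟨_, KRcoupling_nonempty p q hp hq⟩ KRcont_cost.continuousOn
  set M := KRcost γ₀ with hMdef
  have hmin : ∀ γ ∈ KRCoupling p q, M ≤ KRcost γ := fun γ hγ => hminOn hγ
  obtain ⟨f₀, hf₀, hmaxOn⟩ := KRisCompact_LipN.exists_isMaxOn ⟨0, KRzero_mem_LipN⟩
    (Continuous.continuousOn
      (continuous_finset_sum _ fun x _ => (continuous_apply x).mul continuous_const)
      (f := fun f : X → ℝ => ∑ x, f x * (p x - q x)))
  set V := ∑ x, f₀ x * (p x - q x) with hVdef
  have hVM : V ≤ M := KRweak p q γ₀ hγ₀.1 hγ₀.2.1 hγ₀.2.2 f₀ hf₀.1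
  have hMV : M ≤ V := by
    refine le_of_forall_pos_le_add ?_
    intro ε hε
    obtain ⟨f, hflip, hfval⟩ := KReps p q hp hq γ₀ hγ₀ hmin ε hε
    set x0 := Classical.arbitrary X with hx0
    set f' : X → ℝ := fun x => f x - f x0 with hf'def
    have hf' : f' ∈ KRLipN := by
      refine ⟨fun x y => ?_, by simp [hf'def, hx0]⟩
      have := hflip x y
      simpa [hf'def] using this
    have hval' : ∑ x, f' x * (p x - q x) = ∑ x, f x * (p x - q x) := by
      have e1 : ∑ x, f' x * (p x - q x)
          = ∑ x, f x * (p x - q x) - ∑ x, f x0 * (p x - q x) := by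
        rw [← Finset.sum_sub_distrib]
        exact Finset.sum_congr rfl fun x _ => by rw [hf'def]; ring
      have e2 : ∑ x, f x0 * (p x - q x) = 0 := by
        rw [← Finset.mul_sum, Finset.sum_sub_distrib, hp.2, hq.2]
        ring
      rw [e1, e2, sub_zero]
    have hle : ∑ x, f' x * (p x - q x) ≤ V := hmaxOn hf'
    rw [hval'] at hle
    linarith
  have hMVeq : V = M := le_antisymm hVM hMV
  refine ⟨M, ⟨⟨γ₀, hγ₀.1, hγ₀.2.1, hγ₀.2.2, rfl⟩, ?_⟩, ⟨⟨f₀, hf₀.1, hMVeq.symm⟩, ?_⟩⟩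
  · rintro t ⟨γ, h0, h1, h2, rfl⟩
    exact hmin γ ⟨h0, h1, h2⟩
  · rintro t ⟨f, hf, rfl⟩
    exact KRweak p q γ₀ hγ₀.1 hγ₀.2.1 hγ₀.2.2 f hf
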